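/- Under the error variables R̃ = R R̂^T, ṽ = v - R̃v̂, p̃ = p - R̃p̂ - (I₃ - R̃)p_c, the closed-loop dynamics of the continuous observer satisfy R̃' = R̃(-k_R ψ(MR̃))^×, p̃' = ṽ - R̃K_p R̃^T p̃, ṽ' = (I₃ - R̃)g - R̃K_v R̃^T p̃; in particular the attitude error dynamics are decoupled from (p̃, ṽ). -/

import Mathlib

open Matrix

noncomputable section

attribute [local instance] Matrix.normedAddCommGroup Matrix.normedSpace

def SO3 (R : Matrix (Fin 3) (Fin 3) ℝ) : Prop :=
  Rᵀ * R = 1 ∧ R * Rᵀ = 1 ∧ R.det = 1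

def skew (x : Fin 3 → ℝ) : Matrix (Fin 3) (Fin 3) ℝ :=
  !![0, -x 2, x 1; x 2, 0, -x 0; -x 1, x 0, 0]

def psi (A : Matrix (Fin 3) (Fin 3) ℝ) : Fin 3 → ℝ :=
  (2 : ℝ)⁻¹ • ![A 2 1 - A 1 2, A 0 2 - A 2 0, A 1 0 - A 0 1]

/-! ### Auxiliary algebraic lemmas -/

theorem skew_smul' (c : ℝ) (a : Fin 3 → ℝ) : skew (c • a) = c • skew a := by
  ext i j; fin_cases i <;> fin_cases j <;> simp [skew]

theorem skew_add' (a b : Fin 3 → ℝ) : skew (a + b) = skew a + skew b := by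
  ext i j; fin_cases i <;> fin_cases j <;> simp [skew] <;> ring

theorem skew_sum' {ι : Type*} (s : Finset ι) (f : ι → Fin 3 → ℝ) :
    skew (∑ i ∈ s, f i) = ∑ i ∈ s, skew (f i) := by
  ext i j
  fin_cases i <;> fin_cases j <;>
    simp [skew, Finset.sum_apply, Matrix.sum_apply, Finset.sum_neg_distrib]

theorem skew_zero' : skew (0 : Fin 3 → ℝ) = 0 := by
  ext i j; fin_cases i <;> fin_cases j <;> simp [skew, vecHead, vecTail]

theorem skew_transpose' (x : Fin 3 → ℝ) : (skew x)ᵀ = -skew x := by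
  ext i j; fin_cases i <;> fin_cases j <;> simp [skew]

theorem skew_mulVec_self' (q : Fin 3 → ℝ) : (skew q).mulVec q = 0 := by
  funext i; fin_cases i <;>
    simp [skew, Matrix.mulVec, dotProduct, Fin.sum_univ_three] <;> ring

theorem psi_sum' {ι : Type*} (s : Finset ι) (f : ι → Matrix (Fin 3) (Fin 3) ℝ) :
    psi (∑ i ∈ s, f i) = ∑ i ∈ s, psi (f i) := by
  funext j
  fin_cases j <;>
    simp [psi, Finset.sum_apply, Matrix.sum_apply] <;>
    rw [← Finset.sum_sub_distrib, Finset.mul_sum]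

theorem psi_smul' (c : ℝ) (A : Matrix (Fin 3) (Fin 3) ℝ) : psi (c • A) = c • psi A := by
  funext j; fin_cases j <;> simp [psi] <;> ring

theorem psi_term' (q : Fin 3 → ℝ) (Q : Matrix (Fin 3) (Fin 3) ℝ) :
    psi (vecMulVec q q * Q) = -((2 : ℝ)⁻¹ • (skew q).mulVec (Qᵀ.mulVec q)) := by
  funext j
  fin_cases j <;>
    simp [psi, skew, vecMulVec, Matrix.mul_apply, Matrix.mulVec, Matrix.vecMul, dotProduct,
      Matrix.transpose_apply, Fin.sum_univ_three] <;> ring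

theorem SO3.transpose_eq_adjugate' {Q : Matrix (Fin 3) (Fin 3) ℝ} (h : SO3 Q) :
    Qᵀ = adjugate Q := by
  have h1 : Q * adjugate Q = 1 := by rw [Matrix.mul_adjugate, h.2.2]; simp
  calc Qᵀ = Qᵀ * (Q * adjugate Q) := by rw [h1, mul_one]
    _ = (Qᵀ * Q) * adjugate Q := by rw [mul_assoc]
    _ = adjugate Q := by rw [h.1, one_mul]

theorem conj_skew' {Q : Matrix (Fin 3) (Fin 3) ℝ} (h : SO3 Q) (x : Fin 3 → ℝ) :
    Q * skew x * Qᵀ = skew (Q.mulVec x) := by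
  have had := h.transpose_eq_adjugate'
  rw [adjugate_fin_three] at had
  have e00 := congrFun (congrFun had 0) 0
  have e01 := congrFun (congrFun had 0) 1
  have e02 := congrFun (congrFun had 0) 2
  have e10 := congrFun (congrFun had 1) 0
  have e11 := congrFun (congrFun had 1) 1
  have e12 := congrFun (congrFun had 1) 2
  have e20 := congrFun (congrFun had 2) 0
  have e21 := congrFun (congrFun had 2) 1
  have e22 := congrFun (congrFun had 2) 2
  simp only [Matrix.transpose_apply, Matrix.cons_val', Matrix.cons_val_zero, Matrix.cons_val_one,
    Matrix.head_cons, Matrix.empty_val', Matrix.cons_val_fin_one, Matrix.head_fin_const,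
    Matrix.of_apply, Matrix.cons_val_two, Matrix.tail_cons] at e00 e01 e02 e10 e11 e12 e20 e21 e22
  ext i j
  fin_cases i <;> fin_cases j <;>
    simp [skew, Matrix.mul_apply, Matrix.mulVec, dotProduct, Fin.sum_univ_three] <;>
    first
    | ring1
    | linear_combination x 0 * e02 + x 1 * e12 + x 2 * e22
    | linear_combination -(x 0 * e02) - x 1 * e12 - x 2 * e22
    | linear_combination -(x 0 * e01) - x 1 * e11 - x 2 * e21
    | linear_combination x 0 * e01 + x 1 * e11 + x 2 * e21
    | linear_combination x 0 * e00 + x 1 * e10 + x 2 * e20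
    | linear_combination -(x 0 * e00) - x 1 * e10 - x 2 * e20

theorem sum_mulVec' {ι : Type*} (s : Finset ι) (B : ι → Matrix (Fin 3) (Fin 3) ℝ)
    (w : Fin 3 → ℝ) : (∑ i ∈ s, B i).mulVec w = ∑ i ∈ s, (B i).mulVec w := by
  funext j
  simp only [Matrix.mulVec, dotProduct, Matrix.sum_apply, Finset.sum_apply, Finset.sum_mul]
  rw [Finset.sum_comm]

theorem mulVec_sum_smul' {ι : Type*} (s : Finset ι) (A : Matrix (Fin 3) (Fin 3) ℝ)
    (c : ι → ℝ) (v : ι → Fin 3 → ℝ) :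
    ∑ i ∈ s, c i • A.mulVec (v i) = A.mulVec (∑ i ∈ s, c i • v i) := by
  simp only [← Matrix.mulVecLin_apply]
  rw [map_sum]
  exact Finset.sum_congr rfl fun i _ => (_root_.map_smul _ _ _).symm

/-! ### Derivative lemmas -/

theorem hasDerivAt_matrix {A : ℝ → Matrix (Fin 3) (Fin 3) ℝ} {A' : Matrix (Fin 3) (Fin 3) ℝ}
    {t : ℝ} :
    HasDerivAt A A' t ↔ ∀ i j, HasDerivAt (fun s => A s i j) (A' i j) t := by
  exact hasDerivAt_pi.trans (forall_congr' fun i => hasDerivAt_pi)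

theorem HasDerivAt.matmul {A B : ℝ → Matrix (Fin 3) (Fin 3) ℝ} {A' B' : Matrix (Fin 3) (Fin 3) ℝ}
    {t : ℝ} (hA : HasDerivAt A A' t) (hB : HasDerivAt B B' t) :
    HasDerivAt (fun s => A s * B s) (A' * B t + A t * B') t := by
  rw [hasDerivAt_matrix] at *
  intro i j
  have heq : ∀ s, (A s * B s) i j = ∑ l : Fin 3, A s i l * B s l j := fun s => by
    simp [Matrix.mul_apply]
  simp only [heq]
  have h := HasDerivAt.fun_sum (u := Finset.univ) (fun l _ => ((hA i l).fun_mul (hB l j)))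
  convert h using 1
  · rfl
  · rfl
  simp [Matrix.add_apply, Matrix.mul_apply, Finset.sum_add_distrib]

theorem HasDerivAt.matvec {A : ℝ → Matrix (Fin 3) (Fin 3) ℝ} {x : ℝ → Fin 3 → ℝ}
    {A' : Matrix (Fin 3) (Fin 3) ℝ} {x' : Fin 3 → ℝ} {t : ℝ}
    (hA : HasDerivAt A A' t) (hx : HasDerivAt x x' t) :
    HasDerivAt (fun s => (A s).mulVec (x s)) (A'.mulVec (x t) + (A t).mulVec x') t := by
  rw [hasDerivAt_matrix] at hA
  rw [hasDerivAt_pi] at *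
  intro i
  have heq : ∀ s, (A s).mulVec (x s) i = ∑ l : Fin 3, A s i l * x s l := fun s => by
    simp [Matrix.mulVec, dotProduct]
  simp only [heq]
  have h := HasDerivAt.fun_sum (u := Finset.univ) (fun l _ => ((hA i l).fun_mul (hx l)))
  convert h using 1
  simp [Matrix.mulVec, dotProduct, Pi.add_apply, Finset.sum_add_distrib]

theorem HasDerivAt.mtranspose {A : ℝ → Matrix (Fin 3) (Fin 3) ℝ} {A' : Matrix (Fin 3) (Fin 3) ℝ}
    {t : ℝ} (hA : HasDerivAt A A' t) :
    HasDerivAt (fun s => (A s)ᵀ) A'ᵀ t := by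
  rw [hasDerivAt_matrix] at *
  intro i j; exact hA j i

/-- Closed-loop error dynamics of the continuous navigation observer:
`R̃' = R̃(-k_R ψ(MR̃))^×`, `p̃' = ṽ - R̃K_pR̃ᵀp̃`, `ṽ' = (I - R̃)g - R̃K_vR̃ᵀp̃`;
in particular the attitude error dynamics are decoupled from `(p̃, ṽ)`. -/
theorem closed_loop_error_dynamics
    (N : ℕ) (pl : Fin N → Fin 3 → ℝ) (k : Fin N → ℝ)
    (hk : ∀ i, 0 < k i) (hsum : ∑ i, k i = 1)
    (pc : Fin 3 → ℝ) (hpc : pc = ∑ i, k i • pl i)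
    (M : Matrix (Fin 3) (Fin 3) ℝ)
    (hM : M = ∑ i, k i • vecMulVec (pl i - pc) (pl i - pc))
    (kR : ℝ) (Kp Kv : Matrix (Fin 3) (Fin 3) ℝ) (g : Fin 3 → ℝ)
    -- true state and inputs
    (R : ℝ → Matrix (Fin 3) (Fin 3) ℝ) (p v : ℝ → Fin 3 → ℝ)
    (ω a : ℝ → Fin 3 → ℝ)
    (hRSO3 : ∀ t, SO3 (R t))
    (hRdot : ∀ t, HasDerivAt R (R t * skew (ω t)) t)
    (hpdot : ∀ t, HasDerivAt p (v t) t)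
    (hvdot : ∀ t, HasDerivAt v (g + (R t).mulVec (a t)) t)
    -- measurements
    (y : ℝ → Fin N → Fin 3 → ℝ) (hy : ∀ t i, y t i = (R t)ᵀ.mulVec (pl i - p t))
    -- observer state
    (Rh : ℝ → Matrix (Fin 3) (Fin 3) ℝ) (ph vh : ℝ → Fin 3 → ℝ)
    (hRhSO3 : ∀ t, SO3 (Rh t))
    -- innovation terms
    (σR yb : ℝ → Fin 3 → ℝ)
    (hσR : ∀ t, σR t = (2 : ℝ)⁻¹ •
      ∑ i, k i • (skew (pl i - pc)).mulVec (pl i - ph t - (Rh t).mulVec (y t i)))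
    (hyb : ∀ t, yb t = ∑ i, k i • (pl i - ph t - (Rh t).mulVec (y t i)))
    -- observer dynamics
    (hRhdot : ∀ t, HasDerivAt Rh (Rh t * skew (ω t + kR • (Rh t)ᵀ.mulVec (σR t))) t)
    (hphdot : ∀ t, HasDerivAt ph
      (vh t + kR • (skew (σR t)).mulVec (ph t - pc) + Kp.mulVec (yb t)) t)
    (hvhdot : ∀ t, HasDerivAt vh
      (g + (Rh t).mulVec (a t) + kR • (skew (σR t)).mulVec (vh t)
        + Kv.mulVec (yb t)) t)
    -- error variables
    (Rt : ℝ → Matrix (Fin 3) (Fin 3) ℝ) (hRt : ∀ t, Rt t = R t * (Rh t)ᵀ)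
    (vt : ℝ → Fin 3 → ℝ) (hvt : ∀ t, vt t = v t - (Rt t).mulVec (vh t))
    (pt : ℝ → Fin 3 → ℝ)
    (hpt : ∀ t, pt t = p t - (Rt t).mulVec (ph t) - (1 - Rt t).mulVec pc) :
    (∀ t, HasDerivAt Rt (Rt t * skew (-(kR • psi (M * Rt t)))) t) ∧
    (∀ t, HasDerivAt pt
      (vt t - (Rt t * Kp * (Rt t)ᵀ).mulVec (pt t)) t) ∧
    (∀ t, HasDerivAt vt
      ((1 - Rt t).mulVec g - (Rt t * Kv * (Rt t)ᵀ).mulVec (pt t)) t) := by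
  -- basic rotation facts
  have hT : ∀ t, (Rt t)ᵀ = Rh t * (R t)ᵀ := fun t => by
    rw [hRt, transpose_mul, transpose_transpose]
  have hRtT : ∀ t, (Rt t)ᵀ * Rt t = 1 := by
    intro t
    rw [hT, hRt]
    calc Rh t * (R t)ᵀ * (R t * (Rh t)ᵀ) = Rh t * (((R t)ᵀ * R t) * (Rh t)ᵀ) := by
          simp only [mul_assoc]
      _ = 1 := by rw [(hRSO3 t).1, one_mul, (hRhSO3 t).2.1]
  have hRtRh : ∀ t, Rt t * Rh t = R t := fun t => by
    rw [hRt, mul_assoc, (hRhSO3 t).1, mul_one]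
  have hq0 : ∑ i, k i • (pl i - pc) = 0 := by
    have h1 : ∑ i, k i • (pl i - pc) = (∑ i, k i • pl i) - (∑ i, k i) • pc := by
      simp [smul_sub, Finset.sum_sub_distrib, Finset.sum_smul]
    rw [h1, hsum, ← hpc, one_smul, sub_self]
  -- measurement error decomposition
  have hE : ∀ t i, pl i - ph t - (Rh t).mulVec (y t i)
      = (1 - (Rt t)ᵀ).mulVec (pl i - pc) + (Rt t)ᵀ.mulVec (pt t) := by
    intro t i
    rw [hy, Matrix.mulVec_mulVec, ← hT, hpt]
    simp only [Matrix.mulVec_sub, Matrix.sub_mulVec, Matrix.one_mulVec,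
      Matrix.mulVec_mulVec, hRtT]
    abel
  -- innovation identities
  have hybRt : ∀ t, yb t = (Rt t)ᵀ.mulVec (pt t) := by
    intro t
    rw [hyb]
    calc ∑ i, k i • (pl i - ph t - (Rh t).mulVec (y t i))
        = ∑ i, (k i • ((1 - (Rt t)ᵀ).mulVec (pl i - pc))
            + k i • ((Rt t)ᵀ.mulVec (pt t))) := by
          refine Finset.sum_congr rfl fun i _ => ?_
          rw [hE t i, smul_add]
      _ = (1 - (Rt t)ᵀ).mulVec (∑ i, k i • (pl i - pc))
            + (∑ i, k i) • (Rt t)ᵀ.mulVec (pt t) := by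
          rw [Finset.sum_add_distrib, mulVec_sum_smul', Finset.sum_smul]
      _ = (Rt t)ᵀ.mulVec (pt t) := by
          rw [hq0, Matrix.mulVec_zero, hsum, one_smul, zero_add]
  have hpsiM : ∀ t, psi (M * Rt t)
      = ∑ i, k i • -((2:ℝ)⁻¹ • (skew (pl i - pc)).mulVec ((Rt t)ᵀ.mulVec (pl i - pc))) := by
    intro t
    rw [hM, Finset.sum_mul, psi_sum']
    refine Finset.sum_congr rfl fun i _ => ?_
    rw [smul_mul_assoc, psi_smul', psi_term', smul_neg]
  have hσRt : ∀ t, σR t = psi (M * Rt t) := by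
    intro t
    rw [hσR, hpsiM]
    have hstep : ∑ i, k i • (skew (pl i - pc)).mulVec (pl i - ph t - (Rh t).mulVec (y t i))
        = ∑ i, k i • -((skew (pl i - pc)).mulVec ((Rt t)ᵀ.mulVec (pl i - pc))) := by
      calc ∑ i, k i • (skew (pl i - pc)).mulVec (pl i - ph t - (Rh t).mulVec (y t i))
          = ∑ i, (k i • -((skew (pl i - pc)).mulVec ((Rt t)ᵀ.mulVec (pl i - pc)))
              + (skew (k i • (pl i - pc))).mulVec ((Rt t)ᵀ.mulVec (pt t))) := by
            refine Finset.sum_congr rfl fun i _ => ?_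
            rw [hE t i, skew_smul', Matrix.smul_mulVec]
            rw [Matrix.mulVec_add, Matrix.sub_mulVec, Matrix.one_mulVec, Matrix.mulVec_sub,
              skew_mulVec_self', zero_sub, smul_add]
        _ = ∑ i, k i • -((skew (pl i - pc)).mulVec ((Rt t)ᵀ.mulVec (pl i - pc)))
              + (skew (∑ i, k i • (pl i - pc))).mulVec ((Rt t)ᵀ.mulVec (pt t)) := by
            rw [Finset.sum_add_distrib, skew_sum', sum_mulVec']
        _ = _ := by rw [hq0, skew_zero', Matrix.zero_mulVec, add_zero]
    rw [hstep, Finset.smul_sum]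
    refine Finset.sum_congr rfl fun i _ => ?_
    rw [smul_comm, smul_neg, smul_neg]
  -- conjugation identity
  have hσskew : ∀ t, R t * skew ((Rh t)ᵀ.mulVec (σR t)) * (Rh t)ᵀ = Rt t * skew (σR t) := by
    intro t
    have h1 : Rh t * skew ((Rh t)ᵀ.mulVec (σR t)) * (Rh t)ᵀ = skew (σR t) := by
      rw [conj_skew' (hRhSO3 t), Matrix.mulVec_mulVec, (hRhSO3 t).2.1, Matrix.one_mulVec]
    calc R t * skew ((Rh t)ᵀ.mulVec (σR t)) * (Rh t)ᵀ
        = R t * ((Rh t)ᵀ * Rh t) * skew ((Rh t)ᵀ.mulVec (σR t)) * (Rh t)ᵀ := by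
          rw [(hRhSO3 t).1, mul_one]
      _ = (R t * (Rh t)ᵀ) * (Rh t * skew ((Rh t)ᵀ.mulVec (σR t)) * (Rh t)ᵀ) := by
          simp only [mul_assoc]
      _ = Rt t * skew (σR t) := by rw [h1, hRt]
  -- attitude error derivative
  have hRtd : ∀ t, HasDerivAt Rt (-(kR • (Rt t * skew (σR t)))) t := by
    intro t
    have hfun : Rt = fun s => R s * (Rh s)ᵀ := funext hRt
    rw [hfun]
    have h := (hRdot t).matmul ((hRhdot t).mtranspose)
    convert h using 1
    beta_reduce
    rw [skew_add', skew_smul', transpose_mul, transpose_add, transpose_smul]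
    simp only [skew_transpose', add_mul, neg_mul, smul_mul_assoc, mul_add, mul_neg,
      mul_smul_comm, ← mul_assoc]
    rw [hσskew t, hRt t]
    module
  refine ⟨?_, ?_, ?_⟩
  · -- attitude dynamics
    intro t
    have h := hRtd t
    have hval : Rt t * skew (-(kR • psi (M * Rt t))) = -(kR • (Rt t * skew (σR t))) := by
      rw [← hσRt t, ← smul_neg, skew_smul']
      have : skew (-(σR t)) = -skew (σR t) := by
        have := skew_smul' (-1 : ℝ) (σR t); simpa using this
      rw [this]
      simp [mul_smul_comm, mul_neg]
    rw [hval]; exact h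
  · -- position error dynamics
    intro t
    have hfun : pt = fun s => p s - (Rt s).mulVec (ph s) - (1 - Rt s).mulVec pc := funext hpt
    rw [hfun]
    have hD1 := (hRtd t).matvec (hphdot t)
    have hD2 := ((hasDerivAt_const t (1 : Matrix (Fin 3) (Fin 3) ℝ)).sub (hRtd t)).matvec
      (hasDerivAt_const t pc)
    have h := ((hpdot t).sub hD1).sub hD2
    convert h using 1
    · rfl
    · rfl
    · rfl
    · rfl
    rw [hvt, hybRt, hpt]
    simp only [Matrix.mulVec_add, Matrix.mulVec_sub, Matrix.sub_mulVec, Matrix.neg_mulVec,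
      Matrix.one_mulVec, Matrix.mulVec_zero, Matrix.zero_mulVec, Matrix.mulVec_smul,
      Matrix.smul_mulVec, Matrix.mulVec_mulVec, smul_sub, mul_assoc, zero_sub, neg_neg,
      sub_zero, hRtT, Matrix.mul_one]
    abel
  · -- velocity error dynamics
    intro t
    have hfun : vt = fun s => v s - (Rt s).mulVec (vh s) := funext hvt
    rw [hfun]
    have h := (hvdot t).sub ((hRtd t).matvec (hvhdot t))
    convert h using 1
    · rfl
    · rfl
    · rfl
    · rfl
    rw [hybRt, hpt]
    have hRa : (Rt t).mulVec ((Rh t).mulVec (a t)) = (R t).mulVec (a t) := by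
      rw [Matrix.mulVec_mulVec, hRtRh]
    simp only [Matrix.mulVec_add, Matrix.mulVec_sub, Matrix.sub_mulVec, Matrix.neg_mulVec,
      Matrix.one_mulVec, Matrix.mulVec_smul, Matrix.smul_mulVec, Matrix.mulVec_mulVec,
      smul_sub, mul_assoc, hRtT, Matrix.mul_one] at hRa ⊢
    rw [hRa]
    abel
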